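/- arXiv:1809.00941 — 2 statements merged into one kernel-verified Lean document; each statement's English description precedes it below -/
import Mathlib

section
/- Abstract Möbius inversion: let C be a filtered coalgebra over a field whose degree-zero part C₀ is spanned by group-like elements, and let A be a unital algebra. If φ : C → A is linear and sends every group-like element of C₀ to 1, then φ is invertible in the convolution algebra Lin(C,A), and its inverse is ψ = ∑_{n≥0} (-1)^n (φ - e)^{*n}, which satisfies ψ = e - ψ * (φ - e). -/
open TensorProduct

section

variable {k : Type*} [Field k] {C : Type*} [AddCommGroup C] [Module k C] [Coalgebra k C]
variable {A : Type*} [CommRing A] [Algebra k A]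

/-- Convolution product on `Lin(C, A)`. -/
noncomputable def conv (α β : C →ₗ[k] A) : C →ₗ[k] A :=
  LinearMap.mul' k A ∘ₗ TensorProduct.map α β ∘ₗ Coalgebra.comul

/-- The convolution unit `e = u ∘ ε`. -/
noncomputable def convUnit : C →ₗ[k] A :=
  Algebra.linearMap k A ∘ₗ Coalgebra.counit

/-- Group-like elements: `Δ x = x ⊗ x` and `ε x = 1`. -/
def IsGroupLike (x : C) : Prop :=
  Coalgebra.comul x = x ⊗ₜ[k] x ∧ Coalgebra.counit x = (1 : k)

/-- The coalgebra filtration condition: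
`Δ(Cₙ) ⊆ ∑_{p+q=n} C_p ⊗ C_q`. -/
def ComulFiltered (F : ℕ → Submodule k C) : Prop :=
  ∀ n : ℕ, F n ≤ Submodule.comap (Coalgebra.comul : C →ₗ[k] C ⊗[k] C)
    (⨆ p ∈ {p : ℕ × ℕ | p.1 + p.2 = n},
      LinearMap.range (TensorProduct.map (F p.1).subtype (F p.2).subtype))

/-- The sequence `ψₙ = (φ - e)^{*n}` (left-bracketed convolution powers),
`ψ₀ = e`, `ψ_{n+1} = ψₙ * (φ - e)`. -/
noncomputable def psiSeq (φ : C →ₗ[k] A) : ℕ → (C →ₗ[k] A)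
  | 0 => convUnit
  | n + 1 => conv (psiSeq φ n) (φ - convUnit)

/-! ### Auxiliary lemmas -/

lemma conv_apply (α β : C →ₗ[k] A) (x : C) :
    conv α β x = LinearMap.mul' k A (TensorProduct.map α β (Coalgebra.comul x)) := rfl

lemma conv_unit_right (α : C →ₗ[k] A) : conv α convUnit = α := by
  apply LinearMap.ext; intro x
  have h1 : TensorProduct.map α (convUnit (k := k) (C := C) (A := A)) =
      TensorProduct.map α (Algebra.linearMap k A) ∘ₗ
        (Coalgebra.counit (R := k) (A := C)).lTensor C := by
    apply TensorProduct.ext'; intro a b; rfl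
  rw [conv_apply, h1, LinearMap.comp_apply, Coalgebra.lTensor_counit_comul]
  simp

lemma conv_unit_left (α : C →ₗ[k] A) : conv convUnit α = α := by
  apply LinearMap.ext; intro x
  have h1 : TensorProduct.map (convUnit (k := k) (C := C) (A := A)) α =
      TensorProduct.map (Algebra.linearMap k A) α ∘ₗ
        (Coalgebra.counit (R := k) (A := C)).rTensor C := by
    apply TensorProduct.ext'; intro a b; rfl
  rw [conv_apply, h1, LinearMap.comp_apply, Coalgebra.rTensor_counit_comul]
  simp

lemma conv_assoc (α β γ : C →ₗ[k] A) : conv (conv α β) γ = conv α (conv β γ) := by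
  have h1 : TensorProduct.map (conv α β) γ =
      TensorProduct.map (LinearMap.mul' k A ∘ₗ TensorProduct.map α β) γ ∘ₗ
        (Coalgebra.comul (R := k) (A := C)).rTensor C := by
    apply TensorProduct.ext'; intro a b; rfl
  have h2 : TensorProduct.map α (conv β γ) =
      TensorProduct.map α (LinearMap.mul' k A ∘ₗ TensorProduct.map β γ) ∘ₗ
        (Coalgebra.comul (R := k) (A := C)).lTensor C := by
    apply TensorProduct.ext'; intro a b; rfl
  have h3 : LinearMap.mul' k A ∘ₗ
        TensorProduct.map (LinearMap.mul' k A ∘ₗ TensorProduct.map α β) γ =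
      (LinearMap.mul' k A ∘ₗ
        TensorProduct.map α (LinearMap.mul' k A ∘ₗ TensorProduct.map β γ)) ∘ₗ
        (TensorProduct.assoc k C C C).toLinearMap := by
    apply TensorProduct.ext_threefold; intro x y z
    simp [mul_assoc]
  apply LinearMap.ext; intro x
  show LinearMap.mul' k A (TensorProduct.map (conv α β) γ (Coalgebra.comul x)) =
    LinearMap.mul' k A (TensorProduct.map α (conv β γ) (Coalgebra.comul x))
  rw [h1, h2]
  simp only [LinearMap.comp_apply]
  rw [← LinearMap.comp_apply (LinearMap.mul' k A), h3]
  simp only [LinearMap.comp_apply, LinearEquiv.coe_coe, Coalgebra.coassoc_apply]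

lemma conv_zero_left (β : C →ₗ[k] A) : conv 0 β = 0 := by
  unfold conv
  rw [TensorProduct.map_zero_left, LinearMap.zero_comp, LinearMap.comp_zero]

lemma conv_add_left (α α' β : C →ₗ[k] A) : conv (α + α') β = conv α β + conv α' β := by
  unfold conv
  rw [TensorProduct.map_add_left, LinearMap.add_comp, LinearMap.comp_add]

lemma conv_add_right (α β β' : C →ₗ[k] A) : conv α (β + β') = conv α β + conv α β' := by
  unfold conv
  rw [TensorProduct.map_add_right, LinearMap.add_comp, LinearMap.comp_add]

lemma conv_smul_left (c : k) (α β : C →ₗ[k] A) : conv (c • α) β = c • conv α β := by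
  unfold conv
  rw [TensorProduct.map_smul_left, LinearMap.smul_comp, LinearMap.comp_smul]

lemma conv_smul_right (c : k) (α β : C →ₗ[k] A) : conv α (c • β) = c • conv α β := by
  unfold conv
  rw [TensorProduct.map_smul_right, LinearMap.smul_comp, LinearMap.comp_smul]

lemma conv_sum_left {ι : Type*} (s : Finset ι) (f : ι → (C →ₗ[k] A)) (β : C →ₗ[k] A) :
    conv (∑ i ∈ s, f i) β = ∑ i ∈ s, conv (f i) β := by
  classical
  induction s using Finset.induction_on with
  | empty => simpa using conv_zero_left β
  | insert a s h ih => rw [Finset.sum_insert h, conv_add_left, ih, Finset.sum_insert h]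

lemma conv_sum_right {ι : Type*} (s : Finset ι) (α : C →ₗ[k] A) (f : ι → (C →ₗ[k] A)) :
    conv α (∑ i ∈ s, f i) = ∑ i ∈ s, conv α (f i) := by
  classical
  induction s using Finset.induction_on with
  | empty =>
    have : conv α (0 : C →ₗ[k] A) = 0 := by
      unfold conv
      rw [TensorProduct.map_zero_right, LinearMap.zero_comp, LinearMap.comp_zero]
    simpa using this
  | insert a s h ih => rw [Finset.sum_insert h, conv_add_right, ih, Finset.sum_insert h]

/-- Induction principle extracted from the filtration condition. -/
lemma comul_induction (F : ℕ → Submodule k C) (hfilt : ComulFiltered F) (r : ℕ) (x : C)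
    (hx : x ∈ F r) (P : C ⊗[k] C → Prop) (h0 : P 0)
    (hadd : ∀ s t, P s → P t → P (s + t))
    (htmul : ∀ p q, p + q = r → ∀ a ∈ F p, ∀ b ∈ F q, P (a ⊗ₜ[k] b)) :
    P (Coalgebra.comul x) := by
  have hmem := hfilt r hx
  rw [Submodule.mem_comap, iSup_subtype'] at hmem
  refine Submodule.iSup_induction (motive := P) _ hmem ?_ h0 hadd
  rintro ⟨⟨p, q⟩, hpq⟩ t ht
  obtain ⟨s, rfl⟩ := ht
  induction s using TensorProduct.induction_on with
  | zero => simpa using h0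
  | tmul a b => simpa using htmul p q hpq a a.2 b b.2
  | add u v hu hv => rw [map_add]; exact hadd _ _ hu hv

lemma rho_zero (F : ℕ → Submodule k C)
    (hF0 : F 0 = Submodule.span k {x : C | IsGroupLike (k := k) x})
    (φ : C →ₗ[k] A) (hφ : ∀ x : C, IsGroupLike (k := k) x → φ x = 1) :
    ∀ x ∈ F 0, (φ - convUnit : C →ₗ[k] A) x = 0 := by
  intro x hx
  rw [hF0] at hx
  have hle : Submodule.span k {x : C | IsGroupLike (k := k) x} ≤
      LinearMap.ker (φ - convUnit) := by
    rw [Submodule.span_le]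
    intro y hy
    simp only [SetLike.mem_coe, LinearMap.mem_ker, LinearMap.sub_apply]
    rw [hφ y hy]
    simp [convUnit, hy.2]
  simpa using hle hx

lemma psi_vanish (F : ℕ → Submodule k C) (hfilt : ComulFiltered F)
    (hF0 : F 0 = Submodule.span k {x : C | IsGroupLike (k := k) x})
    (φ : C →ₗ[k] A) (hφ : ∀ x : C, IsGroupLike (k := k) x → φ x = 1) :
    ∀ n r, r < n → ∀ x ∈ F r, psiSeq φ n x = 0 := by
  intro n
  induction n with
  | zero => intro r hr; exact absurd hr (Nat.not_lt_zero r)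
  | succ n ih =>
    intro r hr x hx
    show conv (psiSeq φ n) (φ - convUnit) x = 0
    rw [conv_apply]
    refine comul_induction F hfilt r x hx
      (fun t => LinearMap.mul' k A
        (TensorProduct.map (psiSeq φ n) (φ - convUnit) t) = 0) (by simp) ?_ ?_
    · intro s t hs ht; rw [map_add, map_add, hs, ht, add_zero]
    · intro p q hpq a ha b hb
      simp only [TensorProduct.map_tmul, LinearMap.mul'_apply]
      rcases Nat.eq_zero_or_pos q with hq | hq
      · subst hq
        rw [rho_zero F hF0 φ hφ b hb, mul_zero]
      · have hp : p < n := by omega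
        rw [ih p hp a ha, zero_mul]

lemma conv_congr (F : ℕ → Submodule k C) (hmono : Monotone F) (hfilt : ComulFiltered F)
    (r : ℕ) (x : C) (hx : x ∈ F r) (α α' β β' : C →ₗ[k] A)
    (hα : ∀ y ∈ F r, α y = α' y) (hβ : ∀ y ∈ F r, β y = β' y) :
    conv α β x = conv α' β' x := by
  rw [conv_apply, conv_apply]
  refine comul_induction F hfilt r x hx
    (fun t => LinearMap.mul' k A (TensorProduct.map α β t) =
      LinearMap.mul' k A (TensorProduct.map α' β' t)) (by simp) ?_ ?_
  · intro s t hs ht; rw [map_add, map_add, hs, ht, map_add, map_add]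
  · intro p q hpq a ha b hb
    simp only [TensorProduct.map_tmul, LinearMap.mul'_apply]
    rw [hα a (hmono (by omega : p ≤ r) ha), hβ b (hmono (by omega : q ≤ r) hb)]

lemma conv_rho_psiSeq (φ : C →ₗ[k] A) (n : ℕ) :
    conv (φ - convUnit) (psiSeq φ n) = psiSeq φ (n + 1) := by
  induction n with
  | zero =>
    show conv (φ - convUnit) convUnit = conv convUnit (φ - convUnit)
    rw [conv_unit_right, conv_unit_left]
  | succ n ih =>
    show conv (φ - convUnit) (conv (psiSeq φ n) (φ - convUnit)) = _
    rw [← conv_assoc, ih]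
    rfl

/-- Abstract Möbius inversion: for a filtered coalgebra whose degree-zero part
is spanned by group-like elements, any linear map `φ : C → A` sending
group-like elements to `1` is convolution invertible, and its inverse is
`ψ = ∑_{n ≥ 0} (-1)ⁿ (φ - e)^{*n}` (a locally finite sum), which satisfies
the recursion `ψ = e - ψ * (φ - e)`. -/
theorem abstract_moebius_inversion (F : ℕ → Submodule k C) (hmono : Monotone F)
    (hexh : ⨆ n, F n = ⊤) (hfilt : ComulFiltered F)
    (hF0 : F 0 = Submodule.span k {x : C | IsGroupLike (k := k) x})
    (φ : C →ₗ[k] A) (hφ : ∀ x : C, IsGroupLike (k := k) x → φ x = 1) :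
    ∃ ψ : C →ₗ[k] A,
      conv ψ φ = convUnit ∧ conv φ ψ = convUnit ∧
      ψ = convUnit - conv ψ (φ - convUnit) ∧
      ∀ (r : ℕ) (x : C), x ∈ F r →
        ψ x = ∑ n ∈ Finset.range (r + 1), ((-1 : k) ^ n) • (psiSeq φ n) x := by
  classical
  have hvan := psi_vanish F hfilt hF0 φ hφ
  -- every element lies in some `F n`
  have hdeg : ∀ x : C, ∃ n, x ∈ F n := by
    intro x
    have : x ∈ ⨆ n, F n := hexh ▸ Submodule.mem_top
    exact (Submodule.mem_iSup_of_directed F hmono.directed_le).1 this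
  -- the stabilized sum
  set S : C → A := fun x =>
    ∑ n ∈ Finset.range ((hdeg x).choose + 1), ((-1 : k) ^ n) • psiSeq φ n x with hSdef
  -- sums stabilize
  have hstab : ∀ (s t : ℕ) (x : C), x ∈ F s → s ≤ t →
      ∑ n ∈ Finset.range (t + 1), ((-1 : k) ^ n) • psiSeq φ n x =
      ∑ n ∈ Finset.range (s + 1), ((-1 : k) ^ n) • psiSeq φ n x := by
    intro s t x hx hst
    refine (Finset.sum_subset ?_ ?_).symm
    · exact Finset.range_subset_range.2 (by omega)
    · intro n hn hns
      rw [hvan n s (by simp at hn hns; omega) x hx, smul_zero]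
  have hS : ∀ (r : ℕ) (x : C), x ∈ F r →
      S x = ∑ n ∈ Finset.range (r + 1), ((-1 : k) ^ n) • psiSeq φ n x := by
    intro r x hx
    have h1 := hstab ((hdeg x).choose) (max (hdeg x).choose r) x (hdeg x).choose_spec
      (le_max_left _ _)
    have h2 := hstab r (max (hdeg x).choose r) x hx (le_max_right _ _)
    rw [hSdef]
    simp only
    rw [← h1, h2]
  -- S is linear
  have hSadd : ∀ x y : C, S (x + y) = S x + S y := by
    intro x y
    obtain ⟨a, ha⟩ := hdeg x
    obtain ⟨b, hb⟩ := hdeg y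
    set m := max a b
    have hxm : x ∈ F m := hmono (le_max_left a b) ha
    have hym : y ∈ F m := hmono (le_max_right a b) hb
    rw [hS m x hxm, hS m y hym, hS m (x + y) (add_mem hxm hym), ← Finset.sum_add_distrib]
    refine Finset.sum_congr rfl fun n _ => ?_
    rw [map_add, smul_add]
  have hSsmul : ∀ (c : k) (x : C), S (c • x) = c • S x := by
    intro c x
    obtain ⟨a, ha⟩ := hdeg x
    rw [hS a x ha, hS a (c • x) (Submodule.smul_mem _ c ha), Finset.smul_sum]
    refine Finset.sum_congr rfl fun n _ => ?_
    rw [map_smul, smul_comm]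
  set ψ : C →ₗ[k] A :=
    { toFun := S
      map_add' := hSadd
      map_smul' := hSsmul } with hψdef
  have hψS : ∀ (r : ℕ) (x : C), x ∈ F r →
      ψ x = ∑ n ∈ Finset.range (r + 1), ((-1 : k) ^ n) • psiSeq φ n x := fun r x hx =>
    hS r x hx
  -- the partial-sum linear maps
  set L : ℕ → (C →ₗ[k] A) := fun r =>
    ∑ n ∈ Finset.range (r + 1), ((-1 : k) ^ n) • psiSeq φ n with hLdef
  have hLeq : ∀ (r : ℕ) (y : C), y ∈ F r → ψ y = (L r) y := by
    intro r y hy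
    rw [hψS r y hy, hLdef]
    simp [LinearMap.sum_apply]
  -- key computation: conv ψ (φ - e) x = (convUnit : C →ₗ[k] A) x - ψ x on F r
  have hkey_right : ∀ (r : ℕ) (x : C), x ∈ F r →
      conv ψ (φ - convUnit) x = (convUnit : C →ₗ[k] A) x - ψ x := by
    intro r x hx
    have h1 : conv ψ (φ - convUnit) x = conv (L r) (φ - convUnit) x :=
      conv_congr F hmono hfilt r x hx _ _ _ _ (fun y hy => hLeq r y hy) (fun y _ => rfl)
    rw [h1, hLdef, conv_sum_left]
    have h2 : ∀ n, conv (((-1 : k) ^ n) • psiSeq φ n) (φ - convUnit) =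
        ((-1 : k) ^ n) • psiSeq φ (n + 1) := by
      intro n
      rw [conv_smul_left]
      rfl
    simp only [h2]
    have h3 : (∑ n ∈ Finset.range (r + 1), ((-1 : k) ^ n) • psiSeq φ (n + 1)) x =
        ∑ n ∈ Finset.range (r + 1), ((-1 : k) ^ n) • psiSeq φ (n + 1) x := by
      simp [LinearMap.sum_apply]
    rw [h3]
    have h4 : ∀ n, ((-1 : k) ^ n) • psiSeq φ (n + 1) x =
        -(((-1 : k) ^ (n + 1)) • psiSeq φ (n + 1) x) := by
      intro n
      rw [pow_succ, mul_neg_one, neg_smul, neg_neg]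
    simp only [h4, Finset.sum_neg_distrib]
    have h5 : ∑ n ∈ Finset.range (r + 1), ((-1 : k) ^ (n + 1)) • psiSeq φ (n + 1) x =
        ∑ n ∈ Finset.range (r + 2), ((-1 : k) ^ n) • psiSeq φ n x -
          ((-1 : k) ^ 0) • psiSeq φ 0 x := by
      rw [Finset.sum_range_succ' (fun n => ((-1 : k) ^ n) • psiSeq φ n x) (r + 1)]
      ring
    rw [h5, ← hψS (r + 1) x (hmono (by omega) hx)]
    show -(ψ x - ((-1 : k) ^ 0) • (convUnit : C →ₗ[k] A) x) = (convUnit : C →ₗ[k] A) x - ψ x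
    simp
  have hkey_left : ∀ (r : ℕ) (x : C), x ∈ F r →
      conv (φ - convUnit) ψ x = (convUnit : C →ₗ[k] A) x - ψ x := by
    intro r x hx
    have h1 : conv (φ - convUnit) ψ x = conv (φ - convUnit) (L r) x :=
      conv_congr F hmono hfilt r x hx _ _ _ _ (fun y _ => rfl) (fun y hy => hLeq r y hy)
    rw [h1, hLdef, conv_sum_right]
    have h2 : ∀ n, conv (φ - convUnit) (((-1 : k) ^ n) • psiSeq φ n) =
        ((-1 : k) ^ n) • psiSeq φ (n + 1) := by
      intro n
      rw [conv_smul_right, conv_rho_psiSeq]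
    simp only [h2]
    have h3 : (∑ n ∈ Finset.range (r + 1), ((-1 : k) ^ n) • psiSeq φ (n + 1)) x =
        ∑ n ∈ Finset.range (r + 1), ((-1 : k) ^ n) • psiSeq φ (n + 1) x := by
      simp [LinearMap.sum_apply]
    rw [h3]
    have h4 : ∀ n, ((-1 : k) ^ n) • psiSeq φ (n + 1) x =
        -(((-1 : k) ^ (n + 1)) • psiSeq φ (n + 1) x) := by
      intro n
      rw [pow_succ, mul_neg_one, neg_smul, neg_neg]
    simp only [h4, Finset.sum_neg_distrib]
    have h5 : ∑ n ∈ Finset.range (r + 1), ((-1 : k) ^ (n + 1)) • psiSeq φ (n + 1) x =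
        ∑ n ∈ Finset.range (r + 2), ((-1 : k) ^ n) • psiSeq φ n x -
          ((-1 : k) ^ 0) • psiSeq φ 0 x := by
      rw [Finset.sum_range_succ' (fun n => ((-1 : k) ^ n) • psiSeq φ n x) (r + 1)]
      ring
    rw [h5, ← hψS (r + 1) x (hmono (by omega) hx)]
    show -(ψ x - ((-1 : k) ^ 0) • (convUnit : C →ₗ[k] A) x) = (convUnit : C →ₗ[k] A) x - ψ x
    simp
  -- conclude the recursion as an equality of linear maps
  have hrec : ψ = convUnit - conv ψ (φ - convUnit) := by
    apply LinearMap.ext; intro x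
    obtain ⟨r, hr⟩ := hdeg x
    rw [LinearMap.sub_apply, hkey_right r x hr]
    ring
  have hrec' : conv (φ - convUnit) ψ = convUnit - ψ := by
    apply LinearMap.ext; intro x
    obtain ⟨r, hr⟩ := hdeg x
    rw [LinearMap.sub_apply, hkey_left r x hr]
  refine ⟨ψ, ?_, ?_, hrec, hψS⟩
  · have : conv ψ φ = conv ψ (φ - convUnit) + conv ψ convUnit := by
      rw [← conv_add_right]
      congr 1
      abel
    rw [this, conv_unit_right]
    apply LinearMap.ext; intro x
    obtain ⟨r, hr⟩ := hdeg x
    rw [LinearMap.add_apply, hkey_right r x hr]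
    ring
  · have : conv φ ψ = conv (φ - convUnit) ψ + conv convUnit ψ := by
      rw [← conv_add_left]
      congr 1
      abel
    rw [this, conv_unit_left, hrec']
    apply LinearMap.ext; intro x
    simp

end
end

section
/- Let A be an algebra and R : A → A an idempotent linear operator. Then Ker(R) and Im(R) are both closed under multiplication if and only if R satisfies the Rota–Baxter equation R(xy) + R(x)R(y) = R(R(x)y + xR(y)) for all x, y ∈ A. -/
/-- Atkinson's lemma: for an idempotent linear operator `R` on a (not
necessarily unital) algebra `A`, the kernel and image of `R` are both closed
under multiplication if and only if `R` satisfies the (weight-one)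
Rota–Baxter equation `R(xy) + R(x)R(y) = R(R(x)y + xR(y))`. -/
theorem rotaBaxter_iff_subalgebra_decomposition {k : Type*} [Field k]
    {A : Type*} [NonUnitalRing A] [Module k A] [SMulCommClass k A A] [IsScalarTower k A A]
    (R : A →ₗ[k] A) (hidem : ∀ x : A, R (R x) = R x) :
    ((∀ x y : A, x ∈ LinearMap.ker R → y ∈ LinearMap.ker R → x * y ∈ LinearMap.ker R) ∧
     (∀ x y : A, x ∈ LinearMap.range R → y ∈ LinearMap.range R → x * y ∈ LinearMap.range R))
    ↔ (∀ x y : A, R (x * y) + R x * R y = R (R x * y + x * R y)) := by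
  constructor
  · rintro ⟨hker, hran⟩ x y
    -- decompose x = R x + (x - R x), y = R y + (y - R y)
    have hu : x - R x ∈ LinearMap.ker R := by simp [LinearMap.mem_ker, hidem]
    have hv : y - R y ∈ LinearMap.ker R := by simp [LinearMap.mem_ker, hidem]
    have huv : R ((x - R x) * (y - R y)) = 0 := hker _ _ hu hv
    have hRab : R (R x * R y) = R x * R y := by
      obtain ⟨z, hz⟩ := hran (R x) (R y) ⟨x, rfl⟩ ⟨y, rfl⟩
      rw [← hz, hidem]
    have hexp : x * y = R x * y + x * R y - R x * R y + (x - R x) * (y - R y) := by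
      noncomm_ring
    rw [hexp]
    simp only [map_add, map_sub, huv, hRab]
    abel
  · intro hRB
    constructor
    · intro x y hx hy
      have := hRB x y
      simp only [LinearMap.mem_ker] at hx hy ⊢
      simpa [hx, hy] using this
    · rintro x y ⟨a, rfl⟩ ⟨b, rfl⟩
      have hx : R (R a) = R a := hidem a
      have hy : R (R b) = R b := hidem b
      have := hRB (R a) (R b)
      rw [hx, hy] at this
      refine ⟨R a * R b, ?_⟩
      have h2 : R (R a * R b) + R a * R b = R (R a * R b) + R (R a * R b) := by
        rw [this]; rw [map_add]
      have : R a * R b = R (R a * R b) := by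
        have := add_left_cancel h2
        exact this
      rw [← this]
end
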